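/- If S is an unavoidable set of patterns of length n over [m], then S contains at least one pattern from every conjugacy class of patterns of length n over [m] under cyclic rotation; in particular |S| ≥ T_p(n,m). -/
import Mathlib

/-- `p` is a pattern: its set of letters is exactly `{1, ..., k}` for some `k ≥ 1`. -/
def IsPattern (p : List ℕ) : Prop :=
  ∃ k : ℕ, 1 ≤ k ∧ ∀ x : ℕ, x ∈ p ↔ (1 ≤ x ∧ x ≤ k)

/-- `p` is a pattern all of whose letters lie in `[m] = {1, ..., m}`. -/
def PatternOver (m : ℕ) (p : List ℕ) : Prop :=
  IsPattern p ∧ ∀ x ∈ p, x ≤ m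

/-- An `n`-pattern word over `[m]`: a word over `[m]` each of whose
contiguous subwords of length `n` is a pattern. -/
def IsNPatternWord (n m : ℕ) (w : List ℕ) : Prop :=
  (∀ x ∈ w, 1 ≤ x ∧ x ≤ m) ∧ ∀ u : List ℕ, u <:+: w → u.length = n → IsPattern u

/-- A set `S` of patterns of length `n` over `[m]` is unavoidable if the set of
`n`-pattern words over `[m]` containing no element of `S` as a subword is finite. -/
def UnavoidableP (n m : ℕ) (S : Set (List ℕ)) : Prop :=
  {w : List ℕ | IsNPatternWord n m w ∧ ∀ s ∈ S, ¬ s <:+: w}.Finite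

/-- `Tp n m`: the number of conjugacy classes (under cyclic rotation) of
patterns of length `n` over `[m]`. -/
noncomputable def Tp (n m : ℕ) : ℕ :=
  {C : Set (List ℕ) | ∃ p : List ℕ, p.length = n ∧ PatternOver m p ∧
    C = {q : List ℕ | p ~r q}}.ncard

lemma infix_flatten_replicate (p : List ℕ) (hp : p ≠ []) :
    ∀ k (u : List ℕ), u <:+: (List.replicate k p).flatten → u.length = p.length → p ~r u := by
  intro k
  induction k with
  | zero =>
    intro u hu hl
    simp at hu
    subst hu
    simp at hl
    exact absurd hl.symm (by simpa using hp)
  | succ k ih =>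
    intro u hu hl
    rw [List.replicate_succ, List.flatten_cons] at hu
    obtain ⟨s, t, hst⟩ := hu
    by_cases hs : p.length ≤ s.length
    · -- u lies in the tail copies
      have hpre : p <+: s := by
        have h1 : s <+: p ++ (List.replicate k p).flatten := ⟨u ++ t, by rw [← hst]; simp⟩
        have h2 : p <+: p ++ (List.replicate k p).flatten := ⟨_, rfl⟩
        exact List.prefix_of_prefix_length_le h2 h1 hs
      obtain ⟨s', rfl⟩ := hpre
      apply ih u _ hl
      refine ⟨s', t, ?_⟩
      apply List.append_cancel_left (as := p)
      rw [← hst]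
      simp
    · push_neg at hs
      set r := s.length with hr
      have hdrop : u ++ t = ((p ++ (List.replicate k p).flatten)).drop r := by
        rw [← hst, List.append_assoc, List.drop_left]
      have hu' : u = ((p ++ (List.replicate k p).flatten).drop r).take u.length := by
        rw [← hdrop, List.take_left]
      rcases Nat.eq_zero_or_pos k with rfl | hk
      · -- only one copy: u = p
        simp at hst
        have hup : u = p := List.IsInfix.sublist ⟨s, t, by simpa using hst⟩ |>.eq_of_length hl
        rw [hup]
      · -- u = p.rotate r
        obtain ⟨k', rfl⟩ : ∃ k', k = k' + 1 := ⟨k - 1, by omega⟩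
        have hjoin : (List.replicate (k' + 1) p).flatten = p ++ (List.replicate k' p).flatten := by
          rw [List.replicate_succ, List.flatten_cons]
        have : u = p.drop r ++ p.take r := by
          rw [hu', List.drop_append_of_le_length hs.le, hl,
            List.take_append, List.length_drop,
            List.take_of_length_le (le_refl _ |>.trans (by simp)), hjoin,
            List.take_append_of_le_length (by omega)]
          rw [Nat.sub_sub_self hs.le]
        rw [this, ← List.rotate_eq_drop_append_take hs.le]
        exact ⟨r, rfl⟩

lemma finite_bounded_lists (n m : ℕ) :
    {l : List ℕ | l.length = n ∧ ∀ x ∈ l, x ≤ m}.Finite := by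
  have h : {l : List ℕ | l.length = n ∧ ∀ x ∈ l, x ≤ m} ⊆
      (fun l : List (Fin (m + 1)) => l.map Fin.val) '' {l | l.length = n} := by
    rintro l ⟨hlen, hb⟩
    refine ⟨l.pmap (fun x h => (⟨x, h⟩ : Fin (m + 1))) (fun x hx => by
      have := hb x hx; omega), by simp [hlen], ?_⟩
    simp [List.map_pmap]
  exact ((List.finite_length_eq (Fin (m + 1)) n).image _).subset h

theorem stmt_6 (n m : ℕ) (hn : 1 ≤ n) (hm : 1 ≤ m) (S : Set (List ℕ))
    (hS : ∀ p ∈ S, p.length = n ∧ PatternOver m p)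
    (hunav : UnavoidableP n m S) :
    -- S meets every conjugacy class of patterns of length n over [m]
    (∀ p : List ℕ, p.length = n → PatternOver m p → ∃ s ∈ S, s ~r p) ∧
    -- in particular |S| ≥ T_p(n,m)
    Tp n m ≤ S.ncard := by
  have main : ∀ p : List ℕ, p.length = n → PatternOver m p → ∃ s ∈ S, s ~r p := by
    intro p hlen hpat
    by_contra hcon
    push_neg at hcon
    have hpne : p ≠ [] := by intro h; rw [h] at hlen; simp at hlen; omega
    set f : ℕ → List ℕ := fun k => (List.replicate (k + 1) p).flatten with hf
    have hflen : ∀ k, (f k).length = (k + 1) * n := by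
      intro k; simp [hf, hlen, Nat.mul_comm]
    have hinj : Function.Injective f := by
      intro a b hab
      have : (a + 1) * n = (b + 1) * n := by rw [← hflen a, ← hflen b, hab]
      have := Nat.eq_of_mul_eq_mul_right (by omega) this
      omega
    have hmemp : ∀ x ∈ p, 1 ≤ x ∧ x ≤ m := by
      intro x hx
      obtain ⟨k0, _, hk0⟩ := hpat.1
      exact ⟨((hk0 x).1 hx).1, hpat.2 x hx⟩
    have hmem : ∀ k, f k ∈ {w : List ℕ | IsNPatternWord n m w ∧ ∀ s ∈ S, ¬ s <:+: w} := by
      intro k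
      have hrot : ∀ u : List ℕ, u <:+: f k → u.length = n → p ~r u := by
        intro u hu hl
        exact infix_flatten_replicate p hpne (k + 1) u hu (by rw [hl, hlen])
      refine ⟨⟨?_, ?_⟩, ?_⟩
      · intro x hx
        simp only [hf, List.mem_flatten] at hx
        obtain ⟨l, hl, hxl⟩ := hx
        rw [List.mem_replicate] at hl
        exact hmemp x (hl.2 ▸ hxl)
      · intro u hu hl
        have hr := hrot u hu hl
        obtain ⟨k0, hk0, hiff⟩ := hpat.1
        exact ⟨k0, hk0, fun x => by rw [← hr.perm.mem_iff]; exact hiff x⟩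
      · intro s hsS hinf
        have hr := hrot s hinf (hS s hsS).1
        exact hcon s hsS hr.symm
    exact Set.infinite_of_injective_forall_mem hinj hmem hunav
  refine ⟨main, ?_⟩
  -- finiteness of S
  have hSfin : S.Finite := by
    apply (finite_bounded_lists n m).subset
    intro s hs
    obtain ⟨h1, h2⟩ := hS s hs
    exact ⟨h1, h2.2⟩
  -- injection from conjugacy classes into S
  classical
  set A := {C : Set (List ℕ) | ∃ p : List ℕ, p.length = n ∧ PatternOver m p ∧
    C = {q : List ℕ | p ~r q}} with hA
  set g : Set (List ℕ) → List ℕ := fun C =>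
    if h : ∃ s, s ∈ S ∧ s ∈ C then h.choose else [] with hg
  have hkey : ∀ C ∈ A, g C ∈ S ∧ g C ∈ C := by
    rintro C ⟨p, hlen, hpat, rfl⟩
    obtain ⟨s, hsS, hsr⟩ := main p hlen hpat
    have h : ∃ s, s ∈ S ∧ s ∈ {q : List ℕ | p ~r q} := ⟨s, hsS, hsr.symm⟩
    simp only [hg, dif_pos h]
    exact h.choose_spec
  have := Set.ncard_le_ncard_of_injOn g (fun C hC => (hkey C hC).1) ?_ hSfin
  · exact this
  · rintro C₁ hC₁ C₂ hC₂ heq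
    obtain ⟨p₁, _, _, rfl⟩ := hC₁
    obtain ⟨p₂, _, _, rfl⟩ := hC₂
    have h1 : p₁ ~r g {q : List ℕ | p₁ ~r q} := (hkey _ ⟨p₁, ‹_›, ‹_›, rfl⟩).2
    have h2 : p₂ ~r g {q : List ℕ | p₂ ~r q} := (hkey _ ⟨p₂, ‹_›, ‹_›, rfl⟩).2
    rw [heq] at h1
    ext q
    constructor
    · intro hq; exact (h2.trans h1.symm).trans hq
    · intro hq; exact (h1.trans h2.symm).trans hq
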